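/- The pushout product of the boundary inclusions ∂Δ[k] → Δ[k] and ∂Δ[k'] → Δ[k'] in simplicial sets is (up to isomorphism) the inclusion of the subcomplex (Δ[k] × ∂Δ[k']) ∪_{∂Δ[k] × ∂Δ[k']} (∂Δ[k] × Δ[k']) into Δ[k] × Δ[k'], and this map is a monomorphism of simplicial sets. -/

import Mathlib

open CategoryTheory CategoryTheory.Limits CategoryTheory.GrothendieckTopology Simplicial SSet

universe u

/-- The union of two subpresheaves. -/
def subpresheafUnion {C : Type u} [Category C] {F : Cᵒᵖ ⥤ Type u} (G H : Subfunctor F) :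
    Subfunctor F where
  obj U := G.obj U ∪ H.obj U
  map := by
    intro U V i x hx
    cases hx with
    | inl hx => exact Or.inl (G.map i hx)
    | inr hx => exact Or.inr (H.map i hx)


noncomputable def ppair {X Y : SSet.{u}} (n : SimplexCategoryᵒᵖ) :
    (X ⨯ Y).obj n → X.obj n × Y.obj n :=
  fun a => ((prod.fst : X ⨯ Y ⟶ X).app n a, (prod.snd : X ⨯ Y ⟶ Y).app n a)

lemma ppair_eq {X Y : SSet.{u}} (n : SimplexCategoryᵒᵖ) :
    ppair (X := X) (Y := Y) n =
      (PreservesLimitPair.iso ((evaluation SimplexCategoryᵒᵖ (Type u)).obj n) X Y ≪≫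
        Types.binaryProductIso (X.obj n) (Y.obj n)).hom := by
  funext a
  have h1 := types_congr_hom (Types.binaryProductIso_hom_comp_fst (X.obj n) (Y.obj n))
    (prodComparison ((evaluation SimplexCategoryᵒᵖ (Type u)).obj n) X Y a)
  have h2 := types_congr_hom (Types.binaryProductIso_hom_comp_snd (X.obj n) (Y.obj n))
    (prodComparison ((evaluation SimplexCategoryᵒᵖ (Type u)).obj n) X Y a)
  have h3 := types_congr_hom (prodComparison_fst ((evaluation SimplexCategoryᵒᵖ (Type u)).obj n) X Y) a
  have h4 := types_congr_hom (prodComparison_snd ((evaluation SimplexCategoryᵒᵖ (Type u)).obj n) X Y) a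
  simp only [types_comp_apply] at h1 h2 h3 h4
  ext
  · simpa [ppair, PreservesLimitPair.iso_hom] using h3.symm
  · simpa [ppair, PreservesLimitPair.iso_hom] using h4.symm

lemma ppair_bijective {X Y : SSet.{u}} (n : SimplexCategoryᵒᵖ) :
    Function.Bijective (ppair (X := X) (Y := Y) n) := by
  rw [ppair_eq]
  exact (isIso_iff_bijective _).mp inferInstance

lemma ppair_map {X Y X' Y' : SSet.{u}} (u : X ⟶ X') (v : Y ⟶ Y') (n : SimplexCategoryᵒᵖ)
    (a : (X ⨯ Y).obj n) :
    ppair n ((prod.map u v).app n a) = (u.app n (ppair n a).1, v.app n (ppair n a).2) := by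
  have h1 := types_congr_hom (congr_app (prod.map_fst u v) n) a
  have h2 := types_congr_hom (congr_app (prod.map_snd u v) n) a
  simp only [NatTrans.comp_app, types_comp_apply] at h1 h2
  exact Prod.ext h1 h2

lemma boundaryInclusion_app_injective (m : ℕ) (n : SimplexCategoryᵒᵖ) :
    Function.Injective ((∂Δ[m]).ι.app n) := fun a b hab => Subtype.ext hab

lemma pushout_app_jointly_surjective {A B C : SSet.{u}} (f : A ⟶ B) (g : A ⟶ C)
    (n : SimplexCategoryᵒᵖ) (w : (pushout f g).obj n) :
    (∃ x, (pushout.inl f g).app n x = w) ∨ ∃ y, (pushout.inr f g).app n y = w := by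
  have e := isColimitOfPreserves ((evaluation SimplexCategoryᵒᵖ (Type u)).obj n)
    (colimit.isColimit (span f g))
  obtain ⟨j, y, hy⟩ := Types.jointly_surjective_of_isColimit e w
  match j with
  | .left => exact Or.inl ⟨y, hy⟩
  | .right => exact Or.inr ⟨y, hy⟩
  | .zero =>
    refine Or.inl ⟨f.app n y, ?_⟩
    have := types_congr_hom (congr_app (colimit.w (span f g) WalkingSpan.Hom.fst) n) y
    simp only [NatTrans.comp_app, types_comp_apply, span_map_fst] at this ⊢
    exact this.trans hy

lemma prod_map_app_injective {X Y X' Y' : SSet.{u}} {u : X ⟶ X'} {v : Y ⟶ Y'}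
    (n : SimplexCategoryᵒᵖ) (hu : Function.Injective (u.app n))
    (hv : Function.Injective (v.app n)) :
    Function.Injective ((prod.map u v).app n) := by
  intro a b hab
  apply (ppair_bijective n).1
  have := (ppair_map u v n a).symm.trans ((congrArg (ppair n) hab).trans (ppair_map u v n b))
  exact Prod.ext (hu (congrArg Prod.fst this)) (hv (congrArg Prod.snd this))

lemma id_app_injective {X : SSet.{u}} (n : SimplexCategoryᵒᵖ) :
    Function.Injective ((𝟙 X : X ⟶ X).app n) := fun a b hab => by simpa using hab

theorem key_mono (k k' : ℕ)
    (w : prod.map ((∂Δ[k]).ι) (𝟙 (∂Δ[k'] : SSet)) ≫ prod.map (𝟙 Δ[k]) ((∂Δ[k']).ι) =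
      prod.map (𝟙 (∂Δ[k] : SSet)) ((∂Δ[k']).ι) ≫ prod.map ((∂Δ[k]).ι) (𝟙 Δ[k'])) :
    Mono (pushout.desc (prod.map (𝟙 Δ[k]) ((∂Δ[k']).ι))
        (prod.map ((∂Δ[k]).ι) (𝟙 Δ[k'])) w) := by
  set ι := (∂Δ[k]).ι
  set ι' := (∂Δ[k']).ι
  set pl := prod.map (𝟙 Δ[k]) ι' with hpl
  set pr := prod.map ι (𝟙 Δ[k']) with hpr
  set f := prod.map ι (𝟙 (∂Δ[k'] : SSet)) with hf
  set g := prod.map (𝟙 (∂Δ[k] : SSet)) ι' with hg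
  set h := pushout.desc pl pr w with hh
  have hinl : ∀ n x, h.app n ((pushout.inl f g).app n x) = pl.app n x := by
    intro n x
    have := types_congr_hom (congr_app (pushout.inl_desc pl pr w) n) x
    simp only [NatTrans.comp_app, types_comp_apply] at this
    exact this
  have hinr : ∀ n y, h.app n ((pushout.inr f g).app n y) = pr.app n y := by
    intro n y
    have := types_congr_hom (congr_app (pushout.inr_desc pl pr w) n) y
    simp only [NatTrans.comp_app, types_comp_apply] at this
    exact this
  rw [NatTrans.mono_iff_mono_app]
  intro n
  rw [mono_iff_injective]
  intro a b hab
  have key_mixed : ∀ (x : (Δ[k] ⨯ ∂Δ[k'] : SSet).obj n) (y : (∂Δ[k] ⨯ Δ[k'] : SSet).obj n),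
      pl.app n x = pr.app n y →
      (pushout.inl f g).app n x = (pushout.inr f g).app n y := by
    intro x y hxy
    have hx := ppair_map (𝟙 Δ[k]) ι' n x
    have hy := ppair_map ι (𝟙 Δ[k']) n y
    rw [hxy, hy] at hx
    have hfst : ι.app n (ppair n y).1 = (ppair n x).1 := by
      simpa using congrArg Prod.fst hx
    have hsnd : (ppair n y).2 = ι'.app n (ppair n x).2 := by
      simpa using congrArg Prod.snd hx
    obtain ⟨z, hz⟩ := (ppair_bijective (X := ∂Δ[k]) (Y := ∂Δ[k']) n).2
      ((ppair n y).1, (ppair n x).2)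
    have hzx : f.app n z = x := by
      apply (ppair_bijective n).1
      rw [ppair_map, hz]
      exact Prod.ext (by simpa using hfst) rfl
    have hzy : g.app n z = y := by
      apply (ppair_bijective n).1
      rw [ppair_map, hz]
      exact Prod.ext rfl (by simpa using hsnd.symm)
    have hc := types_congr_hom (congr_app (pushout.condition (f := f) (g := g)) n) z
    simp only [NatTrans.comp_app, types_comp_apply] at hc
    rw [← hzx, ← hzy]
    exact hc
  rcases pushout_app_jointly_surjective f g n a with ⟨x, rfl⟩ | ⟨x, rfl⟩ <;>
    rcases pushout_app_jointly_surjective f g n b with ⟨y, rfl⟩ | ⟨y, rfl⟩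
  · rw [hinl, hinl] at hab
    rw [prod_map_app_injective n (id_app_injective n) (boundaryInclusion_app_injective k' n) hab]
  · rw [hinl, hinr] at hab
    exact key_mixed x y hab
  · rw [hinr, hinl] at hab
    exact (key_mixed y x hab.symm).symm
  · rw [hinr, hinr] at hab
    rw [prod_map_app_injective n (boundaryInclusion_app_injective k n) (id_app_injective n) hab]

theorem key_image (k k' : ℕ)
    (w : prod.map ((∂Δ[k]).ι) (𝟙 (∂Δ[k'] : SSet)) ≫ prod.map (𝟙 Δ[k]) ((∂Δ[k']).ι) =
      prod.map (𝟙 (∂Δ[k] : SSet)) ((∂Δ[k']).ι) ≫ prod.map ((∂Δ[k]).ι) (𝟙 Δ[k'])) :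
    Subfunctor.range (pushout.desc (prod.map (𝟙 Δ[k]) ((∂Δ[k']).ι))
        (prod.map ((∂Δ[k]).ι) (𝟙 Δ[k'])) w) =
      subpresheafUnion (Subfunctor.range (prod.map (𝟙 Δ[k]) ((∂Δ[k']).ι)))
        (Subfunctor.range (prod.map ((∂Δ[k]).ι) (𝟙 Δ[k']))) := by
  set ι := (∂Δ[k]).ι
  set ι' := (∂Δ[k']).ι
  set pl := prod.map (𝟙 Δ[k]) ι' with hpl
  set pr := prod.map ι (𝟙 Δ[k']) with hpr
  set f := prod.map ι (𝟙 (∂Δ[k'] : SSet)) with hf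
  set g := prod.map (𝟙 (∂Δ[k] : SSet)) ι' with hg
  set h := pushout.desc pl pr w with hh
  have hinl : ∀ n x, h.app n ((pushout.inl f g).app n x) = pl.app n x := by
    intro n x
    have := types_congr_hom (congr_app (pushout.inl_desc pl pr w) n) x
    simp only [NatTrans.comp_app, types_comp_apply] at this
    exact this
  have hinr : ∀ n y, h.app n ((pushout.inr f g).app n y) = pr.app n y := by
    intro n y
    have := types_congr_hom (congr_app (pushout.inr_desc pl pr w) n) y
    simp only [NatTrans.comp_app, types_comp_apply] at this
    exact this
  apply Subfunctor.ext
  funext n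
  apply Set.ext
  intro t
  constructor
  · rintro ⟨a, rfl⟩
    rcases pushout_app_jointly_surjective f g n a with ⟨x, rfl⟩ | ⟨y, rfl⟩
    · exact Or.inl ⟨x, (hinl n x).symm⟩
    · exact Or.inr ⟨y, (hinr n y).symm⟩
  · rintro (⟨x, rfl⟩ | ⟨y, rfl⟩)
    · exact ⟨(pushout.inl f g).app n x, hinl n x⟩
    · exact ⟨(pushout.inr f g).app n y, hinr n y⟩


/-- The pushout product of the boundary inclusions `∂Δ[k] → Δ[k]` and `∂Δ[k'] → Δ[k']`:
it is a monomorphism, and identifies the pushout with the subcomplex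
`(Δ[k] × ∂Δ[k']) ∪_{∂Δ[k] × ∂Δ[k']} (∂Δ[k] × Δ[k'])` of `Δ[k] × Δ[k']`, i.e. its image is
the union of the images of `Δ[k] × ∂Δ[k']` and `∂Δ[k] × Δ[k']`. -/
theorem boundary_pushoutProduct (k k' : ℕ) :
    Mono (pushout.desc (f := prod.map ((∂Δ[k]).ι) (𝟙 (∂Δ[k'] : SSet)))
        (g := prod.map (𝟙 (∂Δ[k] : SSet)) ((∂Δ[k']).ι))
        (prod.map (𝟙 Δ[k]) ((∂Δ[k']).ι))
        (prod.map ((∂Δ[k]).ι) (𝟙 Δ[k']))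
        (by rw [prod.map_map, prod.map_map]; simp)) ∧
    Subfunctor.range (pushout.desc (f := prod.map ((∂Δ[k]).ι) (𝟙 (∂Δ[k'] : SSet)))
        (g := prod.map (𝟙 (∂Δ[k] : SSet)) ((∂Δ[k']).ι))
        (prod.map (𝟙 Δ[k]) ((∂Δ[k']).ι))
        (prod.map ((∂Δ[k]).ι) (𝟙 Δ[k']))
        (by rw [prod.map_map, prod.map_map]; simp)) =
      subpresheafUnion (Subfunctor.range (prod.map (𝟙 Δ[k]) ((∂Δ[k']).ι)))
        (Subfunctor.range (prod.map ((∂Δ[k]).ι) (𝟙 Δ[k']))) :=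
  ⟨key_mono k k' _, key_image k k' _⟩
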